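/- Suppose data points y_1, ..., y_N in R^D are drawn from a union of independent subspaces S_1, ..., S_n, and y_j ∈ S_i. If c ∈ R^N satisfies y_j = Σ_{l≠j} c_l y_l and c is the least-squares (minimum-norm exact) solution restricted to a support set A, then setting to zero all coefficients c_l with y_l ∉ S_i still yields an exact representation: y_j = Σ_{l: y_l ∈ S_i, l≠j} c_l y_l. -/

import Mathlib

open Module
open scoped Classical

lemma finrank_finset_sup_le {K V : Type*} [Field K] [AddCommGroup V] [Module K V]
    [FiniteDimensional K V] {ι : Type*} (S : ι → Submodule K V) (t : Finset ι) :
    finrank K (t.sup S : Submodule K V) ≤ ∑ k ∈ t, finrank K (S k) := by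
  classical
  induction t using Finset.induction with
  | empty => simp
  | insert _ _ h ih =>
    rename_i a s
    rw [Finset.sup_insert, Finset.sum_insert h]
    calc finrank K ↥(S a ⊔ s.sup S)
        ≤ finrank K (S a) + finrank K (s.sup S : Submodule K V) := by
          have := Submodule.finrank_sup_add_finrank_inf_eq (S a) (s.sup S)
          omega
      _ ≤ _ := by omega

lemma indep_of_dim {D n : ℕ} (S : Fin n → Submodule ℝ (EuclideanSpace ℝ (Fin D)))
    (hdim : finrank ℝ (↥(⨆ i, S i)) = ∑ i, finrank ℝ (↥(S i))) (i : Fin n) :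
    S i ⊓ (Finset.univ.erase i).sup S = ⊥ := by
  classical
  set T := (Finset.univ.erase i).sup S with hT
  have hsup : S i ⊔ T = ⨆ k, S k := by
    apply le_antisymm
    · apply sup_le (le_iSup S i)
      exact Finset.sup_le fun k _ => le_iSup S k
    · apply iSup_le fun k => ?_
      by_cases hk : k = i
      · subst hk; exact le_sup_left
      · exact le_trans (Finset.le_sup (Finset.mem_erase.mpr ⟨hk, Finset.mem_univ k⟩)) le_sup_right
  have h1 := Submodule.finrank_sup_add_finrank_inf_eq (S i) T
  have h2 : finrank ℝ (T : Submodule ℝ (EuclideanSpace ℝ (Fin D))) ≤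
      ∑ k ∈ Finset.univ.erase i, finrank ℝ (S k) := finrank_finset_sup_le S _
  have h3 : ∑ k, finrank ℝ (S k) = finrank ℝ (S i) + ∑ k ∈ Finset.univ.erase i, finrank ℝ (S k) :=
    (Finset.add_sum_erase _ _ (Finset.mem_univ i)).symm
  rw [hsup] at h1
  have : finrank ℝ ↥(S i ⊓ T) = 0 := by omega
  exact Submodule.finrank_eq_zero.mp this

/-- Data points `y 1, ..., y N` in `ℝ^D` drawn from a union of independent subspaces
`S 1, ..., S n`, with `y j ∈ S i`.  If `c` gives an exact representation
`y j = ∑_{l ≠ j} c l • y l`, then zeroing out all coefficients of points not in `S i`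
still yields an exact representation of `y j`. -/
theorem stmt2 {D N n : ℕ} (S : Fin n → Submodule ℝ (EuclideanSpace ℝ (Fin D)))
    (hdim : finrank ℝ (↥(⨆ i, S i)) = ∑ i, finrank ℝ (↥(S i)))
    (y : Fin N → EuclideanSpace ℝ (Fin D))
    (hunion : ∀ l, ∃ i, y l ∈ S i)
    (j : Fin N) (i : Fin n) (hyj : y j ∈ S i)
    (c : Fin N → ℝ)
    (hrep : y j = ∑ l, if l ≠ j then c l • y l else 0) :
    y j = ∑ l, if l ≠ j ∧ y l ∈ S i then c l • y l else 0 := by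
  classical
  set u := ∑ l, if l ≠ j ∧ y l ∈ S i then c l • y l else 0 with hu
  set v := ∑ l, if l ≠ j ∧ ¬ (y l ∈ S i) then c l • y l else 0 with hv
  have hsplit : y j = u + v := by
    rw [hrep, hu, hv, ← Finset.sum_add_distrib]
    apply Finset.sum_congr rfl
    intro l _
    by_cases h1 : l ≠ j
    · by_cases h2 : y l ∈ S i <;> simp [h1, h2]
    · simp [h1]
  have hUi : u ∈ S i := by
    apply Submodule.sum_mem
    intro l _
    by_cases h : l ≠ j ∧ y l ∈ S i
    · simpa [h] using Submodule.smul_mem _ (c l) h.2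
    · simp [h]
  have hvT : v ∈ (Finset.univ.erase i).sup S := by
    apply Submodule.sum_mem
    intro l _
    by_cases h : l ≠ j ∧ ¬ (y l ∈ S i)
    · rw [if_pos h]
      obtain ⟨k, hk⟩ := hunion l
      have hki : k ≠ i := fun e => h.2 (e ▸ hk)
      exact Submodule.smul_mem _ _
        (Finset.le_sup (f := S) (Finset.mem_erase.mpr ⟨hki, Finset.mem_univ k⟩) hk)
    · simp [h]
  have hvSi : v ∈ S i := by
    have : v = y j - u := by rw [hsplit]; abel
    rw [this]
    exact Submodule.sub_mem _ hyj hUi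
  have hv0 : v = 0 := by
    have := indep_of_dim S hdim i
    have hmem : v ∈ S i ⊓ (Finset.univ.erase i).sup S := ⟨hvSi, hvT⟩
    rw [this] at hmem
    simpa using hmem
  rw [hsplit, hv0, add_zero]
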